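/- Let X = I be a compact interval and α: ℤ_+^k → C⁰(I,I) a ℤ_+^k-action whose pairwise commuting continuous generators f_1,…,f_k are all piecewise monotone, and let N(f_i) denote the number of maximal intervals of monotonicity of f_i. Let ν be a probability measure on G_α with ν_i = ν(f_i) and f the induced random ℤ_+^k-action over (Ω, P_ν, σ). Then h(f) ≤ Σ_{i=1}^k ν_i log N(f_i). -/

import Mathlib

open MeasureTheory Filter Topology Manifold

noncomputable section

namespace RandomZk

/-- the left shift on `ℤ`-indexed sequences. -/
def shiftZ {ι : Type*} (ω : ℤ → ι) : ℤ → ι := fun n => ω (n + 1)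

/-- the left shift on `ℕ`-indexed sequences. -/
def shiftN {ι : Type*} (ω : ℕ → ι) : ℕ → ι := fun n => ω (n + 1)

/-- the random composition `f_ω^n = f_{σ^{n-1}ω} ∘ ⋯ ∘ f_ω` for `ω ∈ G^ℤ`
(note that `f_{σ^t ω} = f_{ω t}`). -/
def cocycleZ {X : Type*} {k : ℕ} (f : Fin k → X → X) (ω : ℤ → Fin k) : ℕ → X → X
  | 0 => id
  | (n + 1) => f (ω n) ∘ cocycleZ f ω n

/-- the random composition `f_ω^n` for `ω ∈ G^{ℤ_+}`. -/
def cocycleN {X : Type*} {k : ℕ} (f : Fin k → X → X) (ω : ℕ → Fin k) : ℕ → X → X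
  | 0 => id
  | (n + 1) => f (ω n) ∘ cocycleN f ω n

/-- `P` is the two-sided Bernoulli (i.i.d. product) measure `ν^ℤ` on `ι^ℤ` with marginal
weights `ν`, characterized by its values on cylinder sets. -/
def IsBernoulliZ {ι : Type*} [MeasurableSpace ι] (ν : ι → ℝ)
    (P : Measure (ℤ → ι)) : Prop :=
  IsProbabilityMeasure P ∧
    ∀ (s : Finset ℤ) (a : ℤ → ι),
      P {ω | ∀ n ∈ s, ω n = a n} = ENNReal.ofReal (∏ n ∈ s, ν (a n))

/-- `P` is the one-sided Bernoulli (i.i.d. product) measure `ν^{ℤ_+}` on `ι^{ℤ_+}`. -/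
def IsBernoulliN {ι : Type*} [MeasurableSpace ι] (ν : ι → ℝ)
    (P : Measure (ℕ → ι)) : Prop :=
  IsProbabilityMeasure P ∧
    ∀ (s : Finset ℕ) (a : ℕ → ι),
      P {ω | ∀ n ∈ s, ω n = a n} = ENNReal.ofReal (∏ n ∈ s, ν (a n))

/-- a finite Borel partition of `X`, indexed by `ι`. -/
def IsPartition {X : Type*} [MeasurableSpace X] {ι : Type*} (Q : ι → Set X) : Prop :=
  (∀ i, MeasurableSet (Q i)) ∧ Pairwise (Function.onFun Disjoint Q) ∧
    (⋃ i, Q i) = Set.univ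

/-- the static entropy `H_μ(Q) = -∑ μ(Q i) log μ(Q i)` of a finite partition. -/
def partEnt {X : Type*} [MeasurableSpace X] (μ : Measure X)
    {ι : Type*} [Fintype ι] (Q : ι → Set X) : ℝ :=
  -∑ i, (μ (Q i)).toReal * Real.log (μ (Q i)).toReal

/-- the entropy `h_μ(f, Q)` of the random `ℤ^k`-action generated by `f`, with respect to the
finite partition `Q`: the limit of `n⁻¹ ∫_Ω H_μ(⋁_{t<n} (f_ω^t)⁻¹ Q) dP(ω)` (the elements of
the join `⋁_{t<n} (f_ω^t)⁻¹ Q` are indexed by the itineraries `a : Fin n → Fin m`). -/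
def hmeasOfZ {X : Type*} [MeasurableSpace X] {k : ℕ} (f : Fin k → X → X)
    (P : Measure (ℤ → Fin k)) (μ : Measure X) {m : ℕ} (Q : Fin m → Set X) : ℝ :=
  atTop.limsup fun n : ℕ =>
    (n : ℝ)⁻¹ * ∫ ω, partEnt μ
      (fun a : Fin n → Fin m => ⋂ t : Fin n, cocycleZ f ω t ⁻¹' Q (a t)) ∂P

/-- the measure-theoretic entropy `h_μ(f)` of the random `ℤ^k`-action generated by `f`:
the supremum of `h_μ(f, Q)` over all finite Borel partitions `Q`. -/
def hmeasZ {X : Type*} [MeasurableSpace X] {k : ℕ} (f : Fin k → X → X)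
    (P : Measure (ℤ → Fin k)) (μ : Measure X) : ℝ :=
  ⨆ (m : ℕ) (Q : {Q : Fin m → Set X // IsPartition Q}), hmeasOfZ f P μ Q.1

/-- `μ` is invariant for the random system: `∫ μ(f_ω⁻¹ A) dP(ω) = μ(A)` for Borel `A`. -/
def RandInvariantZ {X : Type*} [MeasurableSpace X] {k : ℕ} (f : Fin k → X → X)
    (P : Measure (ℤ → Fin k)) (μ : Measure X) : Prop :=
  ∀ A : Set X, MeasurableSet A → ∫⁻ ω, μ (f (ω 0) ⁻¹' A) ∂P = μ A

/-- minimal cardinality of an `(ω,n,ε)`-spanning set of `X` with respect to the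
metric `ρ`, for the random `ℤ^k`-action generated by `f`. -/
def spanCardZ {X : Type*} {k : ℕ} (f : Fin k → X → X) (ρ : X → X → ℝ)
    (ω : ℤ → Fin k) (n : ℕ) (ε : ℝ) : ℕ :=
  sInf {N : ℕ | ∃ F : Finset X, F.card = N ∧
    ∀ x : X, ∃ y ∈ F, ∀ t < n, ρ (cocycleZ f ω t x) (cocycleZ f ω t y) ≤ ε}

/-- the topological entropy `h(f)` of the random `ℤ^k`-action generated by `f`, with
respect to the metric `ρ`:
`h(f) = lim_{ε→0} limsup_n n⁻¹ ∫_Ω log r(ω,n,ε,X) dP(ω)`; since the inner quantity is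
monotone in `ε`, the limit as `ε → 0` is the supremum over `ε > 0`. -/
def htopZ {X : Type*} {k : ℕ} (f : Fin k → X → X) (ρ : X → X → ℝ)
    (P : Measure (ℤ → Fin k)) : ℝ :=
  ⨆ ε : {e : ℝ // 0 < e},
    atTop.limsup fun n : ℕ =>
      (n : ℝ)⁻¹ * ∫ ω, Real.log (spanCardZ f ρ ω n ε.1) ∂P

/-- analogue of `spanCardZ` for one-sided `ℤ_+^k`-actions. -/
def spanCardN {X : Type*} {k : ℕ} (f : Fin k → X → X) (ρ : X → X → ℝ)
    (ω : ℕ → Fin k) (n : ℕ) (ε : ℝ) : ℕ :=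
  sInf {N : ℕ | ∃ F : Finset X, F.card = N ∧
    ∀ x : X, ∃ y ∈ F, ∀ t < n, ρ (cocycleN f ω t x) (cocycleN f ω t y) ≤ ε}

/-- the topological entropy of the random `ℤ_+^k`-action, with respect to the metric `ρ`. -/
def htopN {X : Type*} {k : ℕ} (f : Fin k → X → X) (ρ : X → X → ℝ)
    (P : Measure (ℕ → Fin k)) : ℝ :=
  ⨆ ε : {e : ℝ // 0 < e},
    atTop.limsup fun n : ℕ =>
      (n : ℝ)⁻¹ * ∫ ω, Real.log (spanCardN f ρ ω n ε.1) ∂P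

/-- `max_{J ⊆ {1,…,s}} ∑_{j∈J} ∑_{i=1}^k ν_i d_j λ_{i,j}`. -/
def maxJ {k : ℕ} (ν : Fin k → ℝ) (s : ℕ) (dj : ℕ → ℕ) (lam : Fin k → ℕ → ℝ) : ℝ :=
  (Finset.range s).powerset.sup' (Finset.powerset_nonempty _)
    fun J => ∑ j ∈ J, ∑ i, ν i * (dj j : ℝ) * lam i j

end RandomZk

namespace RandomZk

open Asymptotics
section Auxiliary

lemma aux_fin_cover {m : ℕ} (hm : 1 ≤ m) (c : Fin (m + 1) → ℝ) (hc : Monotone c)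
    {x : ℝ} (h0 : c 0 ≤ x) (h1 : x ≤ c (Fin.last m)) :
    ∃ t : Fin m, c t.castSucc ≤ x ∧ x ≤ c t.succ := by
  classical
  set T : Finset (Fin (m + 1)) := Finset.univ.filter (fun j => c j ≤ x) with hT
  have h0T : (0 : Fin (m + 1)) ∈ T := by simp [hT, h0]
  set j := T.max' ⟨0, h0T⟩ with hjdef
  have hjT : j ∈ T := T.max'_mem _
  have hj : c j ≤ x := (Finset.mem_filter.mp hjT).2
  by_cases hlt : (j : ℕ) < m
  · refine ⟨⟨j, hlt⟩, ?_, ?_⟩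
    · have : (⟨j, hlt⟩ : Fin m).castSucc = j := by ext; simp
      rw [this]; exact hj
    · by_contra hcon
      have hsucc : c (⟨j, hlt⟩ : Fin m).succ < x := lt_of_not_ge hcon
      have hmem : ((⟨j, hlt⟩ : Fin m).succ : Fin (m+1)) ∈ T := by
        simp only [hT, Finset.mem_filter, Finset.mem_univ, true_and]
        exact le_of_lt hsucc
      have := T.le_max' _ hmem
      rw [← hjdef] at this
      have : ((⟨j, hlt⟩ : Fin m).succ : ℕ) ≤ (j : ℕ) := this
      simp at this
  · have hjm : (j : ℕ) = m := by omega
    obtain ⟨m', rfl⟩ : ∃ m', m = m' + 1 := ⟨m - 1, by omega⟩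
    have hjl : j = Fin.last (m' + 1) := by ext; simpa using hjm
    have hxl : x = c (Fin.last (m' + 1)) := le_antisymm h1 (hjl ▸ hj)
    refine ⟨Fin.last m', ?_, ?_⟩
    · calc c (Fin.last m').castSucc ≤ c (Fin.last (m' + 1)) :=
            hc (Fin.le_last _)
        _ = x := hxl.symm
    · rw [Fin.succ_last]; exact hxl.le

lemma aux_piece_span {X : Type*} [LinearOrder X] (n : ℕ) (u : ℕ → X → ℝ) (D : ℝ)
    (hD : ∀ t < n, ∀ x y : X, |u t x - u t y| ≤ D)
    {S : Set X} (hmono : ∀ t < n, MonotoneOn (u t) S ∨ AntitoneOn (u t) S)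
    {ε : ℝ} (hε : 0 < ε) :
    ∃ F : Finset X, F.card ≤ 2 * ⌈((n : ℝ) * D) / ε⌉₊ + 1 ∧
      ∀ x ∈ S, ∃ y ∈ F, ∀ t < n, |u t x - u t y| ≤ ε := by
  classical
  rcases S.eq_empty_or_nonempty with rfl | ⟨z, hz⟩
  · exact ⟨∅, by simp, by simp⟩
  set h : X → ℝ := fun x => ∑ t ∈ Finset.range n,
    (if MonotoneOn (u t) S then u t x else -u t x) with hh
  have key : ∀ x ∈ S, ∀ y ∈ S, x ≤ y →
      (∀ t < n, |u t x - u t y| ≤ h y - h x) ∧ h y - h x ≤ (n : ℝ) * D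
        ∧ 0 ≤ h y - h x := by
    intro x hx y hy hxy
    have hterm : ∀ t ∈ Finset.range n,
        |u t x - u t y| = ((if MonotoneOn (u t) S then u t y else -u t y)
          - (if MonotoneOn (u t) S then u t x else -u t x)) := by
      intro t ht
      rw [Finset.mem_range] at ht
      by_cases hM : MonotoneOn (u t) S
      · have := hM hx hy hxy
        simp only [if_pos hM]
        rw [abs_sub_comm, abs_of_nonneg (by linarith)]
      · have hA := (hmono t ht).resolve_left hM
        have := hA hx hy hxy
        simp only [if_neg hM]
        rw [abs_of_nonneg (by linarith)]; ring
    have hdiff : h y - h x = ∑ t ∈ Finset.range n, |u t x - u t y| := by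
      rw [hh, ← Finset.sum_sub_distrib]
      exact Finset.sum_congr rfl (fun t ht => (hterm t ht).symm)
    refine ⟨?_, ?_, ?_⟩
    · intro t ht
      rw [hdiff]
      exact Finset.single_le_sum (f := fun s => |u s x - u s y|)
        (fun s _ => abs_nonneg _) (Finset.mem_range.mpr ht)
    · rw [hdiff]
      calc ∑ t ∈ Finset.range n, |u t x - u t y| ≤ ∑ t ∈ Finset.range n, D :=
            Finset.sum_le_sum (fun t ht => hD t (Finset.mem_range.mp ht) x y)
        _ = (n : ℝ) * D := by simp [mul_comm]
    · rw [hdiff]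
      exact Finset.sum_nonneg (fun s _ => abs_nonneg _)
  have habs : ∀ x ∈ S, |h x - h z| ≤ (n : ℝ) * D := by
    intro x hx
    rcases le_total x z with hxz | hzx
    · rw [abs_sub_comm, abs_of_nonneg (key x hx z hz hxz).2.2]
      exact (key x hx z hz hxz).2.1
    · rw [abs_of_nonneg (key z hz x hx hzx).2.2]
      exact (key z hz x hx hzx).2.1
  set M : ℕ := ⌈((n : ℝ) * D) / ε⌉₊ with hM
  set pick : ℤ → X := fun m =>
    if hm : ∃ x ∈ S, ⌊(h x - h z) / ε⌋ = m then hm.choose else z with hpick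
  refine ⟨(Finset.Icc (-(M : ℤ)) (M : ℤ)).image pick, ?_, ?_⟩
  · calc ((Finset.Icc (-(M : ℤ)) (M : ℤ)).image pick).card
        ≤ (Finset.Icc (-(M : ℤ)) (M : ℤ)).card := Finset.card_image_le
      _ = 2 * M + 1 := by
          rw [Int.card_Icc]
          have : ((M : ℤ) + 1 - -(M : ℤ)) = ((2 * M + 1 : ℕ) : ℤ) := by
            push_cast; ring
          rw [this, Int.toNat_natCast]
  · intro x hx
    have hfloor : ⌊(h x - h z) / ε⌋ ∈ Finset.Icc (-(M : ℤ)) (M : ℤ) := by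
      have h1 : |(h x - h z) / ε| ≤ ((n : ℝ) * D) / ε := by
        rw [abs_div, abs_of_pos hε]
        exact div_le_div_of_nonneg_right (habs x hx) hε.le |>.trans_eq rfl
      rw [Finset.mem_Icc]
      constructor
      · rw [Int.le_floor]
        push_cast
        have := (abs_le.mp h1).1
        have h2 : ((n : ℝ) * D) / ε ≤ (M : ℝ) := Nat.le_ceil _
        linarith
      · have h2 : ((n : ℝ) * D) / ε ≤ (M : ℝ) := Nat.le_ceil _
        have := (abs_le.mp h1).2
        calc ⌊(h x - h z) / ε⌋ ≤ ⌊(M : ℝ)⌋ := Int.floor_le_floor (by linarith)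
          _ = (M : ℤ) := by rw [Int.floor_natCast]
    have hex : ∃ x' ∈ S, ⌊(h x' - h z) / ε⌋ = ⌊(h x - h z) / ε⌋ := ⟨x, hx, rfl⟩
    refine ⟨pick ⌊(h x - h z) / ε⌋, Finset.mem_image.mpr ⟨_, hfloor, rfl⟩, ?_⟩
    have hy : pick ⌊(h x - h z) / ε⌋ = hex.choose := by rw [hpick]; exact dif_pos hex
    obtain ⟨hyS, hyfl⟩ := hex.choose_spec
    set y := hex.choose
    rw [hy]
    have hclose : |h x - h y| < ε := by
      have := Int.abs_sub_lt_one_of_floor_eq_floor (R := ℝ) hyfl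
      have heq : (h y - h z) / ε - (h x - h z) / ε = (h y - h x) / ε := by ring
      rw [heq, abs_div, abs_of_pos hε, div_lt_one hε] at this
      rw [abs_sub_comm]; exact this
    intro t ht
    rcases le_total x y with hxy | hyx
    · have := (key x hx y hyS hxy).1 t ht
      calc |u t x - u t y| ≤ h y - h x := this
        _ ≤ |h y - h x| := le_abs_self _
        _ = |h x - h y| := abs_sub_comm _ _
        _ ≤ ε := hclose.le
    · have := (key y hyS x hx hyx).1 t ht
      calc |u t x - u t y| = |u t y - u t x| := abs_sub_comm _ _
        _ ≤ h x - h y := this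
        _ ≤ |h x - h y| := le_abs_self _
        _ ≤ ε := hclose.le

lemma aux_list_span {X : Type*} (Φ : X → X → Prop) (C : ℕ) :
    ∀ L : List (Set X), (∀ S ∈ L, ∃ F : Finset X, F.card ≤ C ∧
        ∀ x ∈ S, ∃ y ∈ F, Φ x y) →
      ∃ F : Finset X, F.card ≤ L.length * C ∧
        ∀ S ∈ L, ∀ x ∈ S, ∃ y ∈ F, Φ x y := by
  classical
  intro L
  induction L with
  | nil => exact fun _ => ⟨∅, by simp, by simp⟩
  | cons a l ih =>
    intro H
    obtain ⟨Fa, hFa, hspan⟩ := H a List.mem_cons_self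
    obtain ⟨Fl, hFl, hspanl⟩ := ih (fun S hS => H S (List.mem_cons_of_mem a hS))
    refine ⟨Fa ∪ Fl, ?_, ?_⟩
    · calc (Fa ∪ Fl).card ≤ Fa.card + Fl.card := Finset.card_union_le _ _
        _ ≤ C + l.length * C := add_le_add hFa hFl
        _ = (a :: l).length * C := by simp [List.length_cons]; ring
    · intro S hS x hx
      rcases List.mem_cons.mp hS with rfl | hS'
      · obtain ⟨y, hy, hΦ⟩ := hspan x hx
        exact ⟨y, Finset.mem_union_left _ hy, hΦ⟩
      · obtain ⟨y, hy, hΦ⟩ := hspanl S hS' x hx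
        exact ⟨y, Finset.mem_union_right _ hy, hΦ⟩

lemma aux_pieces {k : ℕ} {a b : ℝ}
    (f : Fin k → (Set.Icc a b) → (Set.Icc a b))
    (N : Fin k → ℕ)
    (hpm : ∀ i, ∃ c : Fin (N i + 1) → ℝ, Monotone c ∧ c 0 = a ∧ c (Fin.last _) = b ∧
      ∀ t : Fin (N i),
        MonotoneOn (fun x : (Set.Icc a b) => (f i x : ℝ))
          {x : (Set.Icc a b) | c t.castSucc ≤ (x : ℝ) ∧ (x : ℝ) ≤ c t.succ} ∨
        AntitoneOn (fun x : (Set.Icc a b) => (f i x : ℝ))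
          {x : (Set.Icc a b) | c t.castSucc ≤ (x : ℝ) ∧ (x : ℝ) ≤ c t.succ})
    (hN : ∀ i, 1 ≤ N i) (ω : ℕ → Fin k) (n : ℕ) :
    ∃ L : List (Set (Set.Icc a b)), L.length ≤ ∏ t ∈ Finset.range n, N (ω t) ∧
      (∀ x : (Set.Icc a b), ∃ S ∈ L, x ∈ S) ∧
      ∀ S ∈ L, ∀ t ≤ n,
        MonotoneOn (fun x : (Set.Icc a b) => (cocycleN f ω t x).1) S ∨
        AntitoneOn (fun x : (Set.Icc a b) => (cocycleN f ω t x).1) S := by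
  classical
  induction n with
  | zero =>
    refine ⟨[Set.univ], by simp, fun x => ⟨Set.univ, by simp, trivial⟩, ?_⟩
    rintro S hS t ht
    interval_cases t
    simp only [List.mem_singleton] at hS
    subst hS
    left
    intro x _ y _ hxy
    exact Subtype.coe_le_coe.mpr hxy
  | succ n ih =>
    obtain ⟨L, hlen, hcov, hmono⟩ := ih
    obtain ⟨c, hc, hc0, hcl, hct⟩ := hpm (ω n)
    set band : Fin (N (ω n)) → Set (Set.Icc a b) := fun r =>
      {x : (Set.Icc a b) | c r.castSucc ≤ (x : ℝ) ∧ (x : ℝ) ≤ c r.succ} with hband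
    set L' : List (Set (Set.Icc a b)) := L.flatMap fun S =>
      (List.finRange (N (ω n))).map fun r =>
        S ∩ (fun x => cocycleN f ω n x) ⁻¹' (band r) with hL'
    have hmem : ∀ S' ∈ L', ∃ S ∈ L, ∃ r,
        S' = S ∩ (fun x => cocycleN f ω n x) ⁻¹' (band r) := by
      intro S' hS'
      rw [hL', List.mem_flatMap] at hS'
      obtain ⟨S, hS, hS'2⟩ := hS'
      rw [List.mem_map] at hS'2
      obtain ⟨r, _, hr⟩ := hS'2
      exact ⟨S, hS, r, hr.symm⟩
    refine ⟨L', ?_, ?_, ?_⟩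
    · have : L'.length = L.length * N (ω n) := by
        rw [hL', List.length_flatMap]
        have : (L.map (List.length ∘ fun S =>
            (List.finRange (N (ω n))).map fun r =>
              S ∩ (fun x => cocycleN f ω n x) ⁻¹' (band r))) =
            L.map (fun _ => N (ω n)) := by
          apply List.map_congr_left
          intro S _
          simp
        simp only [Function.comp_def] at this
        rw [this, List.map_const', List.sum_replicate, smul_eq_mul, mul_comm]
      rw [this, Finset.prod_range_succ]
      exact Nat.mul_le_mul hlen le_rfl
    · intro x
      obtain ⟨S, hS, hxS⟩ := hcov x
      have hz := (cocycleN f ω n x).2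
      obtain ⟨r, hr1, hr2⟩ := aux_fin_cover (x := (cocycleN f ω n x).1) (hN (ω n)) c hc
        (by rw [hc0]; exact hz.1) (by rw [hcl]; exact hz.2)
      refine ⟨S ∩ (fun x => cocycleN f ω n x) ⁻¹' (band r), ?_, hxS, hr1, hr2⟩
      rw [hL', List.mem_flatMap]
      exact ⟨S, hS, List.mem_map.mpr ⟨r, List.mem_finRange r, rfl⟩⟩
    · intro S' hS' t ht
      obtain ⟨S, hS, r, rfl⟩ := hmem S' hS'
      rcases Nat.lt_or_ge t (n + 1) with ht' | ht'
      · rcases hmono S hS t (Nat.lt_succ_iff.mp ht') with hm | hm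
        · exact Or.inl (hm.mono Set.inter_subset_left)
        · exact Or.inr (hm.mono Set.inter_subset_left)
      · have htn : t = n + 1 := le_antisymm ht ht'
        subst htn
        have hg := hmono S hS n le_rfl
        have hfi := hct r
        rcases hg with hg | hg <;> rcases hfi with hf' | hf'
        · left
          intro x hx y hy hxy
          exact hf' hx.2 hy.2 (Subtype.coe_le_coe.mp (hg hx.1 hy.1 hxy))
        · right
          intro x hx y hy hxy
          exact hf' hx.2 hy.2 (Subtype.coe_le_coe.mp (hg hx.1 hy.1 hxy))
        · right
          intro x hx y hy hxy
          exact hf' hy.2 hx.2 (Subtype.coe_le_coe.mp (hg hx.1 hy.1 hxy))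
        · left
          intro x hx y hy hxy
          exact hf' hy.2 hx.2 (Subtype.coe_le_coe.mp (hg hx.1 hy.1 hxy))

lemma aux_eval_integrable {k : ℕ} (ν : Fin k → ℝ)
    (P : Measure (ℕ → Fin k)) (hP : IsBernoulliN ν P) (g0 : Fin k → ℝ) (t : ℕ) :
    Integrable (fun ω => g0 (ω t)) P := by
  have := hP.1
  have hmeas : Measurable (fun ω : ℕ → Fin k => g0 (ω t)) :=
    (measurable_of_countable g0).comp (measurable_pi_apply t)
  refine Integrable.mono' (integrable_const (∑ j, |g0 j|)) hmeas.aestronglyMeasurable ?_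
  refine Filter.Eventually.of_forall (fun ω => ?_)
  rw [Real.norm_eq_abs]
  exact Finset.single_le_sum (f := fun j => |g0 j|) (fun j _ => abs_nonneg _)
    (Finset.mem_univ _)

lemma aux_eval_integral {k : ℕ} (ν : Fin k → ℝ) (hν0 : ∀ i, 0 ≤ ν i)
    (P : Measure (ℕ → Fin k)) (hP : IsBernoulliN ν P) (g0 : Fin k → ℝ) (t : ℕ) :
    ∫ ω, g0 (ω t) ∂P = ∑ i, ν i * g0 i := by
  have hprob := hP.1
  have hmeas : Measurable (fun ω : ℕ → Fin k => ω t) := measurable_pi_apply t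
  rw [← MeasureTheory.integral_map hmeas.aemeasurable
    ((measurable_of_countable g0).aestronglyMeasurable)]
  have hfin : IsProbabilityMeasure (P.map (fun ω : ℕ → Fin k => ω t)) :=
    Measure.isProbabilityMeasure_map hmeas.aemeasurable
  rw [MeasureTheory.integral_fintype (by apply Integrable.of_finite)]
  refine Finset.sum_congr rfl (fun i _ => ?_)
  have : (P.map (fun ω : ℕ → Fin k => ω t)) {i} = ENNReal.ofReal (ν i) := by
    rw [Measure.map_apply hmeas (measurableSet_singleton i)]
    have hset : (fun ω : ℕ → Fin k => ω t) ⁻¹' {i} =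
        {ω : ℕ → Fin k | ∀ n ∈ ({t} : Finset ℕ), ω n = (fun _ => i) n} := by
      ext ω; simp
    rw [hset, hP.2 ({t} : Finset ℕ) (fun _ => i)]
    simp
  show ((P.map (fun ω : ℕ → Fin k => ω t)) {i}).toReal • g0 i = ν i * g0 i
  rw [this, ENNReal.toReal_ofReal (hν0 i), smul_eq_mul]

lemma aux_log_aff_div (α : ℝ) (hα : 0 < α) :
    Tendsto (fun n : ℕ => ((n : ℝ))⁻¹ * Real.log (α * n + 3)) atTop (nhds 0) := by
  have haff : Tendsto (fun x : ℝ => α * x + 3) atTop atTop :=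
    (tendsto_id.const_mul_atTop hα).atTop_add tendsto_const_nhds
  have h1 : (fun x : ℝ => Real.log (α * x + 3)) =o[atTop] (fun x : ℝ => α * x + 3) :=
    Real.isLittleO_log_id_atTop.comp_tendsto haff
  have h2 : (fun x : ℝ => α * x + 3) =O[atTop] (fun x : ℝ => x) := by
    refine Asymptotics.IsBigO.of_bound (α + 3) ?_
    filter_upwards [eventually_ge_atTop (1 : ℝ)] with x hx
    rw [Real.norm_eq_abs, Real.norm_eq_abs, abs_of_nonneg (by nlinarith),
      abs_of_nonneg (by linarith)]
    nlinarith
  have h3 : (fun x : ℝ => Real.log (α * x + 3)) =o[atTop] (fun x : ℝ => x) :=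
    h1.trans_isBigO h2
  have h4 : Tendsto (fun x : ℝ => Real.log (α * x + 3) / x) atTop (nhds 0) :=
    h3.tendsto_div_nhds_zero
  have h5 := h4.comp tendsto_natCast_atTop_atTop (α := ℕ)
  refine h5.congr (fun n => ?_)
  simp [Function.comp, div_eq_inv_mul]

end Auxiliary

/-- **Topological entropy of random `ℤ_+^k`-actions generated by piecewise monotone interval
maps** (Proposition 3.5(2)): if the pairwise commuting continuous generators `f i` of a
`ℤ_+^k`-action on a compact interval `I = [a,b]` are piecewise monotone with `N i` intervals
of monotonicity, then the induced random `ℤ_+^k`-action satisfies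
`h(f) ≤ ∑ᵢ ν_i log N(f_i)`. -/
theorem topological_entropy_piecewise_monotone_interval
    {k : ℕ} (a b : ℝ) (hab : a ≤ b)
    (f : Fin k → (Set.Icc a b) → (Set.Icc a b)) (hcont : ∀ i, Continuous (f i))
    (hcomm : ∀ i j, f i ∘ f j = f j ∘ f i)
    (N : Fin k → ℕ)
    (hpm : ∀ i, ∃ c : Fin (N i + 1) → ℝ, Monotone c ∧ c 0 = a ∧ c (Fin.last _) = b ∧
      ∀ t : Fin (N i),
        MonotoneOn (fun x : (Set.Icc a b) => (f i x : ℝ))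
          {x : (Set.Icc a b) | c t.castSucc ≤ (x : ℝ) ∧ (x : ℝ) ≤ c t.succ} ∨
        AntitoneOn (fun x : (Set.Icc a b) => (f i x : ℝ))
          {x : (Set.Icc a b) | c t.castSucc ≤ (x : ℝ) ∧ (x : ℝ) ≤ c t.succ})
    (ν : Fin k → ℝ) (hν0 : ∀ i, 0 ≤ ν i) (hν1 : ∑ i, ν i = 1)
    (P : Measure (ℕ → Fin k)) (hP : IsBernoulliN ν P) :
    htopN f dist P ≤ ∑ i, ν i * Real.log (N i) := by
  classical
  have hprob : IsProbabilityMeasure P := hP.1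
  set R : ℝ := ∑ i, ν i * Real.log (N i) with hRdef
  have hRnn : 0 ≤ R :=
    Finset.sum_nonneg fun i _ => mul_nonneg (hν0 i) (Real.log_natCast_nonneg _)
  have hx0 : a ∈ Set.Icc a b := Set.left_mem_Icc.mpr hab
  set x0 : (Set.Icc a b) := ⟨a, hx0⟩ with hx0def
  rw [htopN]
  refine Real.iSup_le ?_ hRnn
  rintro ⟨ε, hε⟩
  show atTop.limsup (fun n : ℕ =>
    ((n : ℝ))⁻¹ * ∫ ω, Real.log (spanCardN f dist ω n ε) ∂P) ≤ R
  rcases eq_or_lt_of_le hab with heq | hlt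
  · -- degenerate case a = b
    have hsub : ∀ x y : (Set.Icc a b), x = y := by
      rintro ⟨x, hx1, hx2⟩ ⟨y, hy1, hy2⟩
      have : x = y := by rw [← heq] at hx2 hy2; linarith
      exact Subtype.ext this
    have hzero : ∀ n : ℕ, ∀ ω : ℕ → Fin k,
        Real.log (spanCardN f dist ω n ε) = 0 := by
      intro n ω
      have h1 : spanCardN f dist ω n ε ≤ 1 := by
        refine Nat.sInf_le ⟨{x0}, Finset.card_singleton _, fun x => ?_⟩
        refine ⟨x0, Finset.mem_singleton_self _, fun t _ => ?_⟩
        rw [hsub x x0]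
        simp only [dist_self]
        exact hε.le
      rcases Nat.le_one_iff_eq_zero_or_eq_one.mp h1 with h | h <;> rw [h] <;> simp
    have heq2 : (fun n : ℕ =>
        ((n : ℝ))⁻¹ * ∫ ω, Real.log (spanCardN f dist ω n ε) ∂P) =
        fun _ : ℕ => (0 : ℝ) := by
      funext n
      have : (fun ω => Real.log (spanCardN f dist ω n ε)) = fun _ => (0 : ℝ) :=
        funext fun ω => hzero n ω
      rw [this, integral_zero, mul_zero]
    rw [heq2, Filter.limsup_const]
    exact hRnn
  · -- main case a < b
    have hN1 : ∀ i, 1 ≤ N i := by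
      intro i
      by_contra hcon
      have hNi : N i = 0 := by omega
      obtain ⟨c, hc, hc0, hcl, _⟩ := hpm i
      have h00 : (0 : Fin (N i + 1)) = Fin.last (N i) := by ext; simp [hNi]
      have : a = b := by rw [← hc0, ← hcl, h00]
      exact absurd this (ne_of_lt hlt)
    set C : ℕ → ℕ := fun n => 2 * ⌈((n : ℝ) * (b - a)) / ε⌉₊ + 1 with hCdef
    have hC1 : ∀ n, 1 ≤ C n := fun n => Nat.le_add_left 1 _
    -- Step 1: spanning cardinality bound
    have spanBound : ∀ (ω : ℕ → Fin k) (n : ℕ),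
        spanCardN f dist ω n ε ≤ (∏ t ∈ Finset.range n, N (ω t)) * C n := by
      intro ω n
      have hprodpos : 0 < ∏ t ∈ Finset.range n, N (ω t) :=
        Finset.prod_pos fun t _ => hN1 (ω t)
      have hRHS1 : 1 ≤ (∏ t ∈ Finset.range n, N (ω t)) * C n :=
        Nat.mul_pos hprodpos (hC1 n)
      cases n with
      | zero =>
        have h1 : spanCardN f dist ω 0 ε ≤ 1 := by
          refine Nat.sInf_le ⟨{x0}, Finset.card_singleton _, fun x => ?_⟩
          exact ⟨x0, Finset.mem_singleton_self _, fun t ht => absurd ht (Nat.not_lt_zero t)⟩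
        exact h1.trans hRHS1
      | succ m =>
        obtain ⟨L, hlen, hcov, hmono⟩ := aux_pieces f N hpm hN1 ω m
        have hspan : ∀ S ∈ L, ∃ F : Finset (Set.Icc a b), F.card ≤ C (m + 1) ∧
            ∀ x ∈ S, ∃ y ∈ F, ∀ t < m + 1,
              dist (cocycleN f ω t x) (cocycleN f ω t y) ≤ ε := by
          intro S hS
          have hD : ∀ t < m + 1, ∀ x y : (Set.Icc a b),
              |(cocycleN f ω t x).1 - (cocycleN f ω t y).1| ≤ b - a := by
            intro t _ x y
            have h1 := (cocycleN f ω t x).2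
            have h2 := (cocycleN f ω t y).2
            rw [abs_le]
            simp only [Set.mem_Icc] at h1 h2
            constructor <;> linarith [h1.1, h1.2, h2.1, h2.2]
          have hm : ∀ t < m + 1,
              MonotoneOn (fun x : (Set.Icc a b) => (cocycleN f ω t x).1) S ∨
              AntitoneOn (fun x : (Set.Icc a b) => (cocycleN f ω t x).1) S :=
            fun t ht => hmono S hS t (Nat.lt_succ_iff.mp ht)
          obtain ⟨F, hFcard, hF⟩ := aux_piece_span (m + 1)
            (fun t x => (cocycleN f ω t x).1) (b - a) hD hm hε
          refine ⟨F, ?_, fun x hx => ?_⟩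
          · exact hFcard.trans_eq (by rw [hCdef])
          · obtain ⟨y, hy, hyd⟩ := hF x hx
            refine ⟨y, hy, fun t ht => ?_⟩
            rw [Subtype.dist_eq, Real.dist_eq]
            exact hyd t ht
        obtain ⟨F, hFcard, hFspan⟩ := aux_list_span
          (fun x y => ∀ t < m + 1, dist (cocycleN f ω t x) (cocycleN f ω t y) ≤ ε)
          (C (m + 1)) L hspan
        have hmem : spanCardN f dist ω (m + 1) ε ≤ F.card := by
          refine Nat.sInf_le ⟨F, rfl, fun x => ?_⟩
          obtain ⟨S, hS, hxS⟩ := hcov x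
          exact hFspan S hS x hxS
        refine hmem.trans (hFcard.trans ?_)
        refine Nat.mul_le_mul (hlen.trans ?_) le_rfl
        rw [Finset.prod_range_succ]
        exact Nat.le_mul_of_pos_right _ (hN1 (ω m))
    -- Step 2: pointwise log bound
    have logBound : ∀ (ω : ℕ → Fin k) (n : ℕ),
        Real.log (spanCardN f dist ω n ε) ≤
          (∑ t ∈ Finset.range n, Real.log (N (ω t))) + Real.log (C n) := by
      intro ω n
      have hRHSnn : 0 ≤ (∑ t ∈ Finset.range n, Real.log (N (ω t))) + Real.log (C n) :=
        add_nonneg (Finset.sum_nonneg fun t _ => Real.log_natCast_nonneg _)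
          (Real.log_natCast_nonneg _)
      rcases Nat.eq_zero_or_pos (spanCardN f dist ω n ε) with hz | hpos
      · rw [hz]; simpa using hRHSnn
      · have h1 : Real.log (spanCardN f dist ω n ε) ≤
            Real.log ((∏ t ∈ Finset.range n, N (ω t)) * C n : ℕ) := by
          refine Real.log_le_log (by exact_mod_cast hpos) ?_
          exact_mod_cast spanBound ω n
        refine h1.trans_eq ?_
        have hprodpos : (0 : ℝ) < ∏ t ∈ Finset.range n, (N (ω t) : ℝ) :=
          Finset.prod_pos fun t _ => by exact_mod_cast hN1 (ω t)
        rw [Nat.cast_mul, Nat.cast_prod, Real.log_mul hprodpos.ne'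
            ((Nat.cast_pos (α := ℝ)).mpr (hC1 n)).ne',
          Real.log_prod
            (fun t _ => ((Nat.cast_pos (α := ℝ)).mpr (hN1 (ω t))).ne')]
    -- Step 3: integral bound
    have intBound : ∀ n : ℕ, ∫ ω, Real.log (spanCardN f dist ω n ε) ∂P ≤
        (n : ℝ) * R + Real.log (C n) := by
      intro n
      have hint : Integrable (fun ω : ℕ → Fin k =>
          (∑ t ∈ Finset.range n, Real.log (N (ω t))) + Real.log (C n)) P := by
        refine Integrable.add ?_ (integrable_const _)
        exact integrable_finset_sum _ fun t _ =>
          aux_eval_integrable ν P hP (fun j => Real.log (N j)) t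
      have h1 : ∫ ω, Real.log (spanCardN f dist ω n ε) ∂P ≤
          ∫ ω, ((∑ t ∈ Finset.range n, Real.log (N (ω t))) + Real.log (C n)) ∂P := by
        refine integral_mono_of_nonneg ?_ hint ?_
        · exact Filter.Eventually.of_forall fun ω => Real.log_natCast_nonneg _
        · exact Filter.Eventually.of_forall fun ω => logBound ω n
      refine h1.trans_eq ?_
      rw [integral_add (integrable_finset_sum _ fun t _ =>
          aux_eval_integrable ν P hP (fun j => Real.log (N j)) t) (integrable_const _),
        integral_finset_sum _ (fun t _ =>
          aux_eval_integrable ν P hP (fun j => Real.log (N j)) t),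
        integral_const]
      have : ∀ t ∈ Finset.range n,
          ∫ ω, Real.log (N (ω t)) ∂P = R :=
        fun t _ => aux_eval_integral ν hν0 P hP (fun j => Real.log (N j)) t
      rw [Finset.sum_congr rfl this, Finset.sum_const, Finset.card_range]
      simp [measure_univ, nsmul_eq_mul]
    -- Step 4: limsup argument
    set u : ℕ → ℝ := fun n =>
      ((n : ℝ))⁻¹ * ∫ ω, Real.log (spanCardN f dist ω n ε) ∂P with hudef
    set v : ℕ → ℝ := fun n =>
      ((n : ℝ))⁻¹ * ((n : ℝ) * R + Real.log (C n)) with hvdef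
    have huv : ∀ n, u n ≤ v n := fun n =>
      mul_le_mul_of_nonneg_left (intBound n) (by positivity)
    have hunn : ∀ n, 0 ≤ u n := fun n =>
      mul_nonneg (by positivity)
        (integral_nonneg fun ω => Real.log_natCast_nonneg _)
    have hlog0 : Tendsto (fun n : ℕ => ((n : ℝ))⁻¹ * Real.log (C n)) atTop (nhds 0) := by
      set α : ℝ := 2 * (b - a) / ε with hαdef
      have hα : 0 < α := by
        rw [hαdef]
        have : 0 < b - a := by linarith
        positivity
      refine tendsto_of_tendsto_of_tendsto_of_le_of_le
        tendsto_const_nhds (aux_log_aff_div α hα) ?_ ?_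
      · intro n
        exact mul_nonneg (by positivity) (Real.log_natCast_nonneg _)
      · intro n
        refine mul_le_mul_of_nonneg_left ?_ (by positivity)
        have hba : (0 : ℝ) < b - a := by linarith
        have hceil : (⌈((n : ℝ) * (b - a)) / ε⌉₊ : ℝ) < ((n : ℝ) * (b - a)) / ε + 1 :=
          Nat.ceil_lt_add_one (by positivity)
        have hCle : (C n : ℝ) ≤ α * n + 3 := by
          have hCcast : (C n : ℝ) = 2 * (⌈((n : ℝ) * (b - a)) / ε⌉₊ : ℝ) + 1 := by
            rw [hCdef]; push_cast; ring
          have h3 : α * (n : ℝ) = 2 * (((n : ℝ) * (b - a)) / ε) := by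
            rw [hαdef]; ring
          rw [hCcast, h3]
          linarith [hceil]
        refine Real.log_le_log ?_ hCle
        exact_mod_cast hC1 n
    have hv : Tendsto v atTop (nhds R) := by
      have h1 : Tendsto (fun n : ℕ => R + ((n : ℝ))⁻¹ * Real.log (C n))
          atTop (nhds (R + 0)) := tendsto_const_nhds.add hlog0
      rw [add_zero] at h1
      refine h1.congr' ?_
      filter_upwards [eventually_ge_atTop 1] with n hn
      have hn0 : ((n : ℝ)) ≠ 0 := Nat.cast_ne_zero.mpr (by omega)
      rw [hvdef]
      field_simp
    calc atTop.limsup u ≤ atTop.limsup v :=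
          Filter.limsup_le_limsup (Filter.Eventually.of_forall huv)
            (Filter.isCoboundedUnder_le_of_eventually_le atTop
              (Filter.Eventually.of_forall hunn))
            hv.isBoundedUnder_le
      _ = R := hv.limsup_eq


end RandomZk
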